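/- Suppose the eigenvalues of a positive compact self-adjoint operator S satisfy t_l ≤ C l^{-b} for all l ≥ 1, where b > 1 and C > 0. Then there exists a constant C_b > 0 (depending only on b and C) such that for all 0 < λ ≤ C, N(λ) := Σ_{l=1}^∞ t_l/(t_l + λ) ≤ C_b λ^{-1/b}. -/

import Mathlib

open Finset

/-- Key pointwise estimate via Bernoulli's inequality:
`(b-1) * (x+1)^(-b) ≤ x^(1-b) - (x+1)^(1-b)` for `x ≥ 1`, `b ≥ 1`. -/
lemma aux_bern {b x : ℝ} (hb : 1 ≤ b) (hx : 1 ≤ x) :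
    (b - 1) * (x + 1) ^ (-b) ≤ x ^ (1 - b) - (x + 1) ^ (1 - b) := by
  have hx0 : (0:ℝ) < x := by linarith
  have hx1 : (0:ℝ) < x + 1 := by linarith
  have hbern : 1 + b * (1 / x) ≤ (1 + 1 / x) ^ b :=
    one_add_mul_self_le_rpow_one_add (le_trans (by norm_num) (by positivity : (0:ℝ) ≤ 1/x)) hb
  have h1 : (1 + 1 / x) = (x + 1) / x := by field_simp
  have key : x + b ≤ (x + 1) ^ b * x ^ (1 - b) := by
    have h2 : (x + 1) ^ b * x ^ (1 - b) = x * ((x + 1) / x) ^ b := by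
      rw [Real.div_rpow hx1.le hx0.le, Real.rpow_sub hx0, Real.rpow_one]
      field_simp
    rw [h2, ← h1]
    calc x + b = x * (1 + b * (1 / x)) := by field_simp
      _ ≤ x * (1 + 1 / x) ^ b := mul_le_mul_of_nonneg_left hbern hx0.le
  have hpow : (0:ℝ) < (x + 1) ^ b := Real.rpow_pos_of_pos hx1 b
  have h3 : (x + 1) ^ (1 - b) = (x + 1) * ((x + 1) ^ b)⁻¹ := by
    rw [Real.rpow_sub hx1, Real.rpow_one, div_eq_mul_inv]
  have h4 : (x + 1) ^ (-b) = ((x + 1) ^ b)⁻¹ := by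
    rw [Real.rpow_neg hx1.le]
  have h5 : x ^ (1 - b) = ((x + 1) ^ b * x ^ (1 - b)) * ((x + 1) ^ b)⁻¹ := by
    field_simp
  rw [h3, h4]
  nlinarith [mul_nonneg (sub_nonneg.mpr key) (inv_nonneg.mpr hpow.le)]

/-- Tail partial-sum estimate for the p-series. -/
lemma aux_tail {b : ℝ} (hb : 1 < b) {N : ℕ} (hN : 1 ≤ N) (n : ℕ) :
    ∑ i ∈ Finset.range n, ((i : ℝ) + N + 1) ^ (-b) ≤ (N : ℝ) ^ (1 - b) / (b - 1) := by
  have hb1 : (0:ℝ) < b - 1 := by linarith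
  set h : ℕ → ℝ := fun i => ((i : ℝ) + N) ^ (1 - b) with hh
  have hN1 : (1:ℝ) ≤ (N : ℝ) := by exact_mod_cast hN
  have hterm : ∀ i : ℕ, ((i : ℝ) + N + 1) ^ (-b) ≤ (h i - h (i + 1)) / (b - 1) := by
    intro i
    have hx : (1:ℝ) ≤ (i : ℝ) + N := by
      have : (0:ℝ) ≤ (i : ℝ) := Nat.cast_nonneg i
      linarith
    have hB := aux_bern hb.le hx
    have heq : h (i + 1) = ((i : ℝ) + N + 1) ^ (1 - b) := by
      simp only [hh]
      push_cast
      ring_nf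
    rw [le_div_iff₀ hb1, heq]
    simpa [hh, mul_comm] using hB
  calc ∑ i ∈ Finset.range n, ((i : ℝ) + N + 1) ^ (-b)
      ≤ ∑ i ∈ Finset.range n, (h i - h (i + 1)) / (b - 1) :=
        Finset.sum_le_sum fun i _ => hterm i
    _ = (∑ i ∈ Finset.range n, (h i - h (i + 1))) / (b - 1) := by
        rw [Finset.sum_div]
    _ = (h 0 - h n) / (b - 1) := by rw [Finset.sum_range_sub' h]
    _ ≤ h 0 / (b - 1) := by
        have hn0 : 0 ≤ h n := Real.rpow_nonneg (by positivity) _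
        gcongr
        linarith
    _ = (N : ℝ) ^ (1 - b) / (b - 1) := by simp [hh]

/-- If the (nonnegative, nonincreasing) eigenvalues satisfy `t l ≤ C * l ^ (-b)` for all
`l ≥ 1` with `b > 1`, `C > 0`, then there is a constant `C_b > 0` such that for all
`0 < lam ≤ C`, the effective dimension `N(lam) = ∑_{l≥1} t l / (t l + lam)` is at most
`C_b * lam ^ (-1/b)`.  (Here `t : ℕ → ℝ` with `t l` the `(l+1)`-st eigenvalue.) -/
theorem stmt8 (t : ℕ → ℝ) (b C : ℝ) (hb : 1 < b) (hC : 0 < C)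
    (htnn : ∀ l, 0 ≤ t l)
    (hdecay : ∀ l : ℕ, 1 ≤ l → t (l - 1) ≤ C * (l : ℝ) ^ (-b)) :
    ∃ Cb : ℝ, 0 < Cb ∧ ∀ lam : ℝ, 0 < lam → lam ≤ C →
      ∑' l : ℕ, t l / (t l + lam) ≤ Cb * lam ^ (-(1 / b)) := by
  have hb0 : (0:ℝ) < b := by linarith
  have hb1 : (0:ℝ) < b - 1 := by linarith
  refine ⟨(2 + 1 / (b - 1)) * C ^ (1 / b), ?_, ?_⟩
  · have h1 : (0:ℝ) < 1 / (b - 1) := by positivity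
    have h2 : (0:ℝ) < C ^ (1 / b) := Real.rpow_pos_of_pos hC _
    positivity
  intro lam hlam hlamC
  have hCl : (1:ℝ) ≤ C / lam := (one_le_div hlam).mpr hlamC
  have hCl0 : (0:ℝ) < C / lam := by linarith
  set R : ℝ := (C / lam) ^ (1 / b) with hR
  have hR1 : (1:ℝ) ≤ R := Real.one_le_rpow hCl (by positivity)
  set N : ℕ := ⌈R⌉₊ with hNdef
  have hN1 : 1 ≤ N := Nat.one_le_ceil_iff.mpr (by linarith)
  have hNR : R ≤ (N : ℝ) := Nat.le_ceil R
  have hN2R : (N : ℝ) ≤ 2 * R := by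
    have := Nat.ceil_lt_add_one (show (0:ℝ) ≤ R by linarith)
    linarith
  -- pointwise bounds
  have hden : ∀ l, 0 < t l + lam := fun l => by have := htnn l; linarith
  have hf1 : ∀ l, t l / (t l + lam) ≤ 1 := fun l =>
    div_le_one_of_le₀ (by linarith) (hden l).le
  have hfnn : ∀ l, 0 ≤ t l / (t l + lam) := fun l => div_nonneg (htnn l) (hden l).le
  have ht' : ∀ l : ℕ, t l ≤ C * ((l : ℝ) + 1) ^ (-b) := by
    intro l
    have := hdecay (l + 1) (Nat.le_add_left 1 l)
    simpa [Nat.add_sub_cancel] using this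
  have hfg : ∀ l : ℕ, t l / (t l + lam) ≤ C / lam * ((l : ℝ) + 1) ^ (-b) := by
    intro l
    calc t l / (t l + lam) ≤ t l / lam := by
          gcongr
          · exact htnn l
          · linarith [htnn l]
      _ ≤ (C * ((l : ℝ) + 1) ^ (-b)) / lam := by gcongr; exact ht' l
      _ = C / lam * ((l : ℝ) + 1) ^ (-b) := by ring
  -- summability
  have hg_sum : Summable (fun l : ℕ => C / lam * ((l : ℝ) + 1) ^ (-b)) := by
    apply Summable.mul_left
    have h0 : Summable (fun n : ℕ => (n : ℝ) ^ (-b)) :=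
      Real.summable_nat_rpow.mpr (by linarith)
    have h1 := (summable_nat_add_iff 1).mpr h0
    simpa [Nat.cast_add] using h1
  have hf_sum : Summable (fun l : ℕ => t l / (t l + lam)) :=
    Summable.of_nonneg_of_le hfnn hfg hg_sum
  -- split the sum
  have hsplit := Summable.sum_add_tsum_nat_add N hf_sum
  rw [← hsplit]
  -- head bound
  have hhead : ∑ i ∈ Finset.range N, t i / (t i + lam) ≤ (N : ℝ) := by
    calc ∑ i ∈ Finset.range N, t i / (t i + lam) ≤ ∑ i ∈ Finset.range N, 1 :=
          Finset.sum_le_sum fun i _ => hf1 i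
      _ = (N : ℝ) := by simp
  -- tail bound
  have htail : ∑' i : ℕ, t (i + N) / (t (i + N) + lam)
      ≤ C / lam * ((N : ℝ) ^ (1 - b) / (b - 1)) := by
    apply Real.tsum_le_of_sum_range_le (fun i => hfnn _)
    intro n
    calc ∑ i ∈ Finset.range n, t (i + N) / (t (i + N) + lam)
        ≤ ∑ i ∈ Finset.range n, C / lam * ((i : ℝ) + N + 1) ^ (-b) := by
          apply Finset.sum_le_sum
          intro i _
          have h := hfg (i + N)
          push_cast at h
          exact h
      _ = C / lam * ∑ i ∈ Finset.range n, ((i : ℝ) + N + 1) ^ (-b) := by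
          rw [Finset.mul_sum]
      _ ≤ C / lam * ((N : ℝ) ^ (1 - b) / (b - 1)) := by
          exact mul_le_mul_of_nonneg_left (aux_tail hb hN1 n) hCl0.le
  -- combine
  have s2 : C / lam * R ^ (1 - b) = R := by
    have e1 : R ^ (1 - b) = (C / lam) ^ (1 / b * (1 - b)) := by
      rw [Real.rpow_mul hCl0.le]
    rw [e1, ← Real.rpow_one_add' hCl0.le]
    · congr 1
      field_simp
      ring
    · intro hcontra
      have : 1 + 1 / b * (1 - b) = 1 / b := by field_simp; ring
      rw [this] at hcontra
      have : (0:ℝ) < 1 / b := by positivity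
      linarith [hcontra]
  have hfinal : (N : ℝ) + C / lam * ((N : ℝ) ^ (1 - b) / (b - 1)) ≤ (2 + 1 / (b - 1)) * R := by
    have s1 : (N : ℝ) ^ (1 - b) ≤ R ^ (1 - b) :=
      Real.rpow_le_rpow_of_nonpos (by linarith) hNR (by linarith)
    have s3 : C / lam * ((N : ℝ) ^ (1 - b) / (b - 1)) ≤ R / (b - 1) := by
      calc C / lam * ((N : ℝ) ^ (1 - b) / (b - 1)) = (C / lam * (N : ℝ) ^ (1 - b)) / (b - 1) := by
            ring
        _ ≤ (C / lam * R ^ (1 - b)) / (b - 1) := by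
            gcongr
        _ = R / (b - 1) := by rw [s2]
    have : (2 + 1 / (b - 1)) * R = 2 * R + R / (b - 1) := by
      field_simp
    linarith
  have hRval : R = C ^ (1 / b) * lam ^ (-(1 / b)) := by
    rw [hR, Real.div_rpow hC.le hlam.le, Real.rpow_neg hlam.le, div_eq_mul_inv]
  calc (∑ i ∈ Finset.range N, t i / (t i + lam)) + ∑' i : ℕ, t (i + N) / (t (i + N) + lam)
      ≤ (N : ℝ) + C / lam * ((N : ℝ) ^ (1 - b) / (b - 1)) := add_le_add hhead htail
    _ ≤ (2 + 1 / (b - 1)) * R := hfinal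
    _ = (2 + 1 / (b - 1)) * C ^ (1 / b) * lam ^ (-(1 / b)) := by rw [hRval]; ring
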